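/- Let ε ∈ [0,1], τ > 0, and let Q : S × A → ℝ satisfy ‖Q‖∞ ≤ 1/(1−γ). Let π be the ε-softmax policy of Q with temperature τ, let Q* : S × A → ℝ satisfy H(Q*) = Q*, and let Q^π : S × A → ℝ satisfy H_π(Q^π) = Q^π. Then ‖Q^π − Q*‖∞² ≤ (12 γ²/(1−γ)²) ‖Q − Q*‖∞² + 12 ε²/(1−γ)⁴ + 3 τ² (log|A|)²/(1−γ)². -/

import Mathlib

section

variable {S A : Type*} [Fintype S] [Fintype A] [Nonempty S] [Nonempty A]

/-- Sup norm on `S × A → ℝ`. -/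
noncomputable def supNorm (Q : S × A → ℝ) : ℝ :=
  Finset.univ.sup' Finset.univ_nonempty fun y => |Q y|

/-- The Bellman optimality operator. -/
noncomputable def bellmanOpt (p : S × A → S → ℝ) (R : S × A → ℝ) (γ : ℝ)
    (Q : S × A → ℝ) : S × A → ℝ :=
  fun sa => R sa + γ * ∑ s', p sa s' *
    (Finset.univ.sup' Finset.univ_nonempty fun a' => Q (s', a'))

/-- The policy Bellman operator `H_π`. -/
noncomputable def bellmanPol (p : S × A → S → ℝ) (R : S × A → ℝ) (γ : ℝ)
    (π : S → A → ℝ) (Q : S × A → ℝ) : S × A → ℝ :=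
  fun sa => R sa + γ * ∑ s', ∑ a', p sa s' * π s' a' * Q (s', a')

/-- The `ε`-softmax policy of `Q` with temperature `τ`. -/
noncomputable def softmaxPolicy (Q : S × A → ℝ) (ε τ : ℝ) : S → A → ℝ :=
  fun s a => ε / (Fintype.card A : ℝ) +
    (1 - ε) * Real.exp (Q (s, a) / τ) / ∑ a', Real.exp (Q (s, a') / τ)

set_option linter.unusedSectionVars false
set_option maxHeartbeats 1000000

lemma abs_le_supNorm (Q : S × A → ℝ) (x : S × A) : |Q x| ≤ supNorm Q :=
  Finset.le_sup' (fun y => |Q y|) (Finset.mem_univ x)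

lemma supNorm_nonneg (Q : S × A → ℝ) : 0 ≤ supNorm Q :=
  le_trans (abs_nonneg _) (abs_le_supNorm Q (Classical.arbitrary _))

lemma supNorm_le (Q : S × A → ℝ) {c : ℝ} (h : ∀ x, |Q x| ≤ c) : supNorm Q ≤ c :=
  Finset.sup'_le _ _ fun x _ => h x

lemma abs_wsum_le {w g : A → ℝ} {c : ℝ} (hw0 : ∀ a, 0 ≤ w a)
    (hw1 : ∑ a, w a = 1) (hg : ∀ a, |g a| ≤ c) : |∑ a, w a * g a| ≤ c := by
  calc |∑ a, w a * g a| ≤ ∑ a, |w a * g a| := Finset.abs_sum_le_sum_abs _ _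
    _ ≤ ∑ a, w a * c := by
        refine Finset.sum_le_sum fun a _ => ?_
        rw [abs_mul, abs_of_nonneg (hw0 a)]
        exact mul_le_mul_of_nonneg_left (hg a) (hw0 a)
    _ = c := by rw [← Finset.sum_mul, hw1, one_mul]

lemma neg_entropy_ge {σ : A → ℝ} (hσpos : ∀ a, 0 < σ a) (hσ1 : ∑ a, σ a = 1) :
    -Real.log (Fintype.card A) ≤ ∑ a, σ a * Real.log (σ a) := by
  have jensen := strictConcaveOn_log_Ioi.concaveOn.le_map_sum (t := Finset.univ)
    (w := σ) (p := fun a => (σ a)⁻¹) (fun a _ => (hσpos a).le) hσ1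
    (fun a _ => Set.mem_Ioi.2 (inv_pos.2 (hσpos a)))
  simp only [smul_eq_mul] at jensen
  have h1 : ∑ a, σ a * (σ a)⁻¹ = (Fintype.card A : ℝ) := by
    rw [Finset.sum_congr rfl (fun a _ => mul_inv_cancel₀ (hσpos a).ne')]
    simp
  have h2 : ∀ a, σ a * Real.log (σ a)⁻¹ = -(σ a * Real.log (σ a)) := by
    intro a; rw [Real.log_inv]; ring
  rw [h1, Finset.sum_congr rfl (fun a _ => h2 a), Finset.sum_neg_distrib] at jensen
  linarith

lemma softmax_ge (q : A → ℝ) (τ : ℝ) (hτ : 0 < τ) (a0 : A) :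
    q a0 - τ * Real.log (Fintype.card A) ≤
    ∑ a, Real.exp (q a / τ) / (∑ b, Real.exp (q b / τ)) * q a := by
  set Z : ℝ := ∑ b, Real.exp (q b / τ) with hZ
  have hZpos : 0 < Z := Finset.sum_pos (fun b _ => Real.exp_pos _) Finset.univ_nonempty
  set σ : A → ℝ := fun a => Real.exp (q a / τ) / Z with hσ
  have hσpos : ∀ a, 0 < σ a := fun a => div_pos (Real.exp_pos _) hZpos
  have hσ1 : ∑ a, σ a = 1 := by
    rw [hσ]; rw [← Finset.sum_div]; field_simp; exact hZ.symm
  have hq : ∀ a, q a = τ * Real.log (σ a) + τ * Real.log Z := by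
    intro a
    have hl : Real.log (σ a) = q a / τ - Real.log Z := by
      rw [hσ]
      simp only
      rw [Real.log_div (Real.exp_ne_zero _) (ne_of_gt hZpos), Real.log_exp]
    rw [hl]; field_simp; ring
  have key : ∑ a, σ a * q a = τ * Real.log Z + τ * ∑ a, σ a * Real.log (σ a) := by
    have h : ∀ a, σ a * q a = τ * (σ a * Real.log (σ a)) + (τ * Real.log Z) * σ a := by
      intro a; rw [hq a]; ring
    rw [Finset.sum_congr rfl (fun a _ => h a), Finset.sum_add_distrib, ← Finset.mul_sum,
      ← Finset.mul_sum, hσ1, mul_one]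
    ring
  have hZge : q a0 ≤ τ * Real.log Z := by
    have h1 : Real.exp (q a0 / τ) ≤ Z :=
      Finset.single_le_sum (f := fun b => Real.exp (q b / τ))
        (fun b _ => (Real.exp_pos _).le) (Finset.mem_univ a0)
    have h2 := Real.log_le_log (Real.exp_pos _) h1
    rw [Real.log_exp] at h2
    calc q a0 = τ * (q a0 / τ) := by field_simp
      _ ≤ τ * Real.log Z := by nlinarith
  have hent := neg_entropy_ge hσpos hσ1
  calc q a0 - τ * Real.log (Fintype.card A)
      ≤ τ * Real.log Z + τ * ∑ a, σ a * Real.log (σ a) := by nlinarith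
    _ = ∑ a, σ a * q a := key.symm
    _ = ∑ a, Real.exp (q a / τ) / Z * q a := rfl

/-- Policy-gap bound for the ε-softmax policy `π` of `Q`:
`‖Q^π − Q*‖∞² ≤ (12γ²/(1−γ)²)‖Q − Q*‖∞² + 12ε²/(1−γ)⁴ + 3τ²(log|A|)²/(1−γ)²`. -/
theorem stmt_16
    (p : S × A → S → ℝ)
    (hp0 : ∀ sa s', 0 ≤ p sa s')
    (hp1 : ∀ sa, ∑ s', p sa s' = 1)
    (R : S × A → ℝ) (hR : ∀ sa, |R sa| ≤ 1)
    (γ : ℝ) (hγ0 : 0 < γ) (hγ1 : γ < 1)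
    (ε τ : ℝ) (hε0 : 0 ≤ ε) (hε1 : ε ≤ 1) (hτ : 0 < τ)
    (Q : S × A → ℝ) (hQ : supNorm Q ≤ 1 / (1 - γ))
    (Qstar : S × A → ℝ) (hQstar : bellmanOpt p R γ Qstar = Qstar)
    (Qpi : S × A → ℝ)
    (hQpi : bellmanPol p R γ (softmaxPolicy Q ε τ) Qpi = Qpi) :
    supNorm (Qpi - Qstar) ^ 2 ≤
      12 * γ ^ 2 / (1 - γ) ^ 2 * supNorm (Q - Qstar) ^ 2 +
        12 * ε ^ 2 / (1 - γ) ^ 4 +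
        3 * τ ^ 2 * Real.log (Fintype.card A) ^ 2 / (1 - γ) ^ 2 := by
  have h1γ : 0 < 1 - γ := by linarith
  have hn1 : (1:ℝ) ≤ (Fintype.card A : ℝ) := by exact_mod_cast Fintype.card_pos
  have hnpos : (0:ℝ) < (Fintype.card A : ℝ) := by linarith
  have hlogn : 0 ≤ Real.log (Fintype.card A) := Real.log_nonneg hn1
  set π : S → A → ℝ := softmaxPolicy Q ε τ with hπdef
  have hZpos : ∀ s : S, (0:ℝ) < ∑ a', Real.exp (Q (s, a') / τ) :=
    fun s => Finset.sum_pos (fun b _ => Real.exp_pos _) Finset.univ_nonempty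
  have hπ0 : ∀ s a, 0 ≤ π s a := by
    intro s a
    refine add_nonneg (div_nonneg hε0 hnpos.le) ?_
    exact div_nonneg (mul_nonneg (by linarith) (Real.exp_pos _).le) (hZpos s).le
  have hπ1 : ∀ s, ∑ a, π s a = 1 := by
    intro s
    have : ∑ a, π s a = ∑ a : A, (ε / (Fintype.card A : ℝ)) +
        ∑ a, (1 - ε) * (Real.exp (Q (s, a) / τ) / ∑ a', Real.exp (Q (s, a') / τ)) := by
      rw [← Finset.sum_add_distrib]
      refine Finset.sum_congr rfl fun a _ => ?_
      show ε / _ + (1 - ε) * Real.exp (Q (s, a) / τ) / _ = _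
      ring
    rw [this, Finset.sum_const, ← Finset.mul_sum, ← Finset.sum_div]
    field_simp
    rw [nsmul_eq_mul, Finset.card_univ, mul_div_assoc', mul_div_right_comm, div_self hnpos.ne', one_mul]; ring
  set D := supNorm (Qpi - Qstar) with hD
  set E := supNorm (Q - Qstar) with hE
  have hE0 : 0 ≤ E := supNorm_nonneg _
  have hD0 : 0 ≤ D := supNorm_nonneg _
  set L := τ * Real.log (Fintype.card A) with hL
  have hL0 : 0 ≤ L := mul_nonneg hτ.le hlogn
  set B := 2 * ε / (1 - γ) with hB
  have hB0 : 0 ≤ B := by positivity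
  -- bounds extracted from sup norms
  have hQabs : ∀ x : S × A, |Q x| ≤ 1 / (1 - γ) := fun x => (abs_le_supNorm Q x).trans hQ
  have hQEs : ∀ x : S × A, |Q x - Qstar x| ≤ E := fun x => by
    have := abs_le_supNorm (Q - Qstar) x; simpa using this
  have hDabs : ∀ x : S × A, |Qpi x - Qstar x| ≤ D := fun x => by
    have := abs_le_supNorm (Qpi - Qstar) x; simpa using this
  -- Step A : for all s', max Qstar - ∑ π Qstar ≤ 2E + B + L, and ≥ 0
  have stepA : ∀ s' : S,
      (Finset.univ.sup' Finset.univ_nonempty fun a' => Qstar (s', a')) -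
        ∑ a', π s' a' * Qstar (s', a') ≤ 2 * E + B + L := by
    intro s'
    set MQ := Finset.univ.sup' Finset.univ_nonempty fun a' => Q (s', a') with hMQ
    set Ms := Finset.univ.sup' Finset.univ_nonempty fun a' => Qstar (s', a') with hMs
    -- Ms ≤ MQ + E
    have h1 : Ms ≤ MQ + E := by
      refine Finset.sup'_le _ _ fun a _ => ?_
      have h1a := hQEs (s', a)
      have h1b : Q (s', a) ≤ MQ := Finset.le_sup' (fun a' => Q (s', a')) (Finset.mem_univ a)
      have := abs_le.mp h1a
      linarith [this.1]
    -- ∑ π (Q - Qstar) ≤ E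
    have h2 : ∑ a', π s' a' * Q (s', a') - ∑ a', π s' a' * Qstar (s', a') ≤ E := by
      have : ∑ a', π s' a' * Q (s', a') - ∑ a', π s' a' * Qstar (s', a')
          = ∑ a', π s' a' * (Q (s', a') - Qstar (s', a')) := by
        rw [← Finset.sum_sub_distrib]; refine Finset.sum_congr rfl fun a _ => by ring
      rw [this]
      have := abs_wsum_le (w := π s') (g := fun a => Q (s', a) - Qstar (s', a))
        (hπ0 s') (hπ1 s') (fun a => hQEs (s', a))
      exact (abs_le.mp this).2
    -- MQ - ∑ π Q ≤ B + L
    have h3 : MQ - ∑ a', π s' a' * Q (s', a') ≤ B + L := by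
      have hsplit : ∑ a', π s' a' * Q (s', a') =
          ε / (Fintype.card A : ℝ) * ∑ a', Q (s', a') +
          (1 - ε) * ∑ a', Real.exp (Q (s', a') / τ) /
            (∑ b, Real.exp (Q (s', b) / τ)) * Q (s', a') := by
        rw [Finset.mul_sum, Finset.mul_sum, ← Finset.sum_add_distrib]
        refine Finset.sum_congr rfl fun a _ => ?_
        show (ε / _ + (1 - ε) * Real.exp (Q (s', a) / τ) / _) * Q (s', a) = _
        ring
      obtain ⟨amax, _, hmax⟩ :=
        Finset.exists_mem_eq_sup' (Finset.univ_nonempty) (fun a' => Q (s', a'))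
      have hsoft : MQ - τ * Real.log (Fintype.card A) ≤
          ∑ a', Real.exp (Q (s', a') / τ) / (∑ b, Real.exp (Q (s', b) / τ)) * Q (s', a') := by
        have := softmax_ge (fun a => Q (s', a)) τ hτ amax
        rw [hMQ, hmax]; exact this
      have hMQle : MQ ≤ 1 / (1 - γ) := by
        rw [hMQ, hmax]
        exact (le_abs_self _).trans (hQabs (s', amax))
      have havg : -(1 / (1 - γ)) * (Fintype.card A : ℝ) ≤ ∑ a', Q (s', a') := by
        calc -(1 / (1 - γ)) * (Fintype.card A : ℝ)
            = ∑ _a' : A, -(1 / (1 - γ)) := by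
              rw [Finset.sum_const]; simp [mul_comm]
          _ ≤ ∑ a', Q (s', a') := by
              refine Finset.sum_le_sum fun a _ => ?_
              have := abs_le.mp (hQabs (s', a)); linarith [this.1]
      -- combines
      have hSsle : MQ - (∑ a', Real.exp (Q (s', a') / τ) /
            (∑ b, Real.exp (Q (s', b) / τ)) * Q (s', a')) ≤ L := by
        rw [hL]; linarith
      have hεpart : ε * MQ - ε / (Fintype.card A : ℝ) * ∑ a', Q (s', a') ≤ B := by
        have h5 : ε / (Fintype.card A : ℝ) * ∑ a', Q (s', a') ≥
            ε / (Fintype.card A : ℝ) * (-(1 / (1 - γ)) * (Fintype.card A : ℝ)) :=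
          mul_le_mul_of_nonneg_left havg (div_nonneg hε0 hnpos.le)
        have h6 : ε / (Fintype.card A : ℝ) * (-(1 / (1 - γ)) * (Fintype.card A : ℝ))
            = -(ε / (1 - γ)) := by field_simp
        have h7 : ε * MQ ≤ ε * (1 / (1 - γ)) := mul_le_mul_of_nonneg_left hMQle hε0
        rw [h6] at h5
        rw [hB]
        have : ε * (1 / (1 - γ)) = ε / (1 - γ) := by ring
        rw [this] at h7
        have : 2 * ε / (1 - γ) = ε / (1 - γ) + ε / (1 - γ) := by ring
        linarith
      have hsoftO : (1 - ε) * MQ - (1 - ε) * ∑ a', Real.exp (Q (s', a') / τ) /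
            (∑ b, Real.exp (Q (s', b) / τ)) * Q (s', a') ≤ (1 - ε) * L := by
        have := mul_le_mul_of_nonneg_left hSsle (by linarith : (0:ℝ) ≤ 1 - ε)
        linarith [this]
      have h8 : (1 - ε) * L ≤ L := by nlinarith
      rw [hsplit]
      nlinarith [hεpart, hsoftO]
    linarith
  -- weighted sum ≤ sup
  have wsum_le_sup : ∀ s' : S, ∑ a', π s' a' * Qstar (s', a') ≤
      Finset.univ.sup' Finset.univ_nonempty fun a' => Qstar (s', a') := by
    intro s'
    calc ∑ a', π s' a' * Qstar (s', a')
        ≤ ∑ a', π s' a' * (Finset.univ.sup' Finset.univ_nonempty fun b => Qstar (s', b)) := by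
          refine Finset.sum_le_sum fun a _ => mul_le_mul_of_nonneg_left ?_ (hπ0 s' a)
          exact Finset.le_sup' (fun b => Qstar (s', b)) (Finset.mem_univ a)
      _ = _ := by rw [← Finset.sum_mul, hπ1, one_mul]
  -- Step C: pointwise bound
  have hpt : ∀ sa : S × A, |Qpi sa - Qstar sa| ≤ γ * (D + (2 * E + B + L)) := by
    intro sa
    have e1 : Qstar sa = R sa + γ * ∑ s', p sa s' *
        (Finset.univ.sup' Finset.univ_nonempty fun a' => Qstar (s', a')) :=
      (congrFun hQstar sa).symm
    have e2 : Qpi sa = R sa + γ * ∑ s', ∑ a', p sa s' * π s' a' * Qpi (s', a') :=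
      (congrFun hQpi sa).symm
    have e3 : ∑ s', ∑ a', p sa s' * π s' a' * Qpi (s', a')
        = ∑ s', p sa s' * ∑ a', π s' a' * Qpi (s', a') := by
      refine Finset.sum_congr rfl fun s' _ => ?_
      rw [Finset.mul_sum]
      refine Finset.sum_congr rfl fun a _ => by ring
    have e4 : Qpi sa - Qstar sa = γ * ∑ s', p sa s' *
        ((∑ a', π s' a' * Qpi (s', a')) -
          (Finset.univ.sup' Finset.univ_nonempty fun a' => Qstar (s', a'))) := by
      have e5 : (∑ s', p sa s' * ∑ a', π s' a' * Qpi (s', a')) -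
          (∑ s', p sa s' * (Finset.univ.sup' Finset.univ_nonempty fun a' => Qstar (s', a')))
          = ∑ s', p sa s' * ((∑ a', π s' a' * Qpi (s', a')) -
            (Finset.univ.sup' Finset.univ_nonempty fun a' => Qstar (s', a'))) := by
        rw [← Finset.sum_sub_distrib]
        exact Finset.sum_congr rfl fun s' _ => by ring
      conv_lhs => rw [e2, e1]
      rw [e3, ← e5]
      ring
    have hterm : ∀ s' : S, |(∑ a', π s' a' * Qpi (s', a')) -
        (Finset.univ.sup' Finset.univ_nonempty fun a' => Qstar (s', a'))|
        ≤ D + (2 * E + B + L) := by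
      intro s'
      have hWW : |(∑ a', π s' a' * Qpi (s', a')) - ∑ a', π s' a' * Qstar (s', a')| ≤ D := by
        have heq : (∑ a', π s' a' * Qpi (s', a')) - ∑ a', π s' a' * Qstar (s', a')
            = ∑ a', π s' a' * (Qpi (s', a') - Qstar (s', a')) := by
          rw [← Finset.sum_sub_distrib]; refine Finset.sum_congr rfl fun a _ => by ring
        rw [heq]
        exact abs_wsum_le (hπ0 s') (hπ1 s') (fun a => hDabs (s', a))
      have hWM : |(∑ a', π s' a' * Qstar (s', a')) -
          (Finset.univ.sup' Finset.univ_nonempty fun a' => Qstar (s', a'))|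
          ≤ 2 * E + B + L := by
        rw [abs_sub_comm, abs_of_nonneg (by linarith [wsum_le_sup s'])]
        exact stepA s'
      calc |(∑ a', π s' a' * Qpi (s', a')) -
          (Finset.univ.sup' Finset.univ_nonempty fun a' => Qstar (s', a'))|
          ≤ |(∑ a', π s' a' * Qpi (s', a')) - ∑ a', π s' a' * Qstar (s', a')| +
            |(∑ a', π s' a' * Qstar (s', a')) -
              (Finset.univ.sup' Finset.univ_nonempty fun a' => Qstar (s', a'))| :=
            abs_sub_le _ _ _
        _ ≤ D + (2 * E + B + L) := add_le_add hWW hWM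
    rw [e4, abs_mul, abs_of_pos hγ0]
    refine mul_le_mul_of_nonneg_left ?_ hγ0.le
    calc |∑ s', p sa s' * _| ≤ ∑ s', |p sa s' * _| := Finset.abs_sum_le_sum_abs _ _
      _ ≤ ∑ s', p sa s' * (D + (2 * E + B + L)) := by
          refine Finset.sum_le_sum fun s' _ => ?_
          rw [abs_mul, abs_of_nonneg (hp0 sa s')]
          exact mul_le_mul_of_nonneg_left (hterm s') (hp0 sa s')
      _ = D + (2 * E + B + L) := by rw [← Finset.sum_mul, hp1, one_mul]
  have hDfix : D ≤ γ * (D + (2 * E + B + L)) := by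
    rw [hD]
    refine supNorm_le _ fun x => ?_
    have := hpt x
    simpa using this
  -- D ≤ a + b + c
  set a := 2 * γ * E / (1 - γ) with ha
  set b := 2 * ε / (1 - γ) ^ 2 with hb
  set c := τ * Real.log (Fintype.card A) / (1 - γ) with hc
  have ha0 : 0 ≤ a := by positivity
  have hb0 : 0 ≤ b := by positivity
  have hc0 : 0 ≤ c := by positivity
  have hDabc : D ≤ a + b + c := by
    have h9 : (1 - γ) * D ≤ γ * (2 * E + B + L) := by nlinarith [hDfix]
    have h10 : γ * B ≤ (1 - γ) * b := by
      rw [hB, hb]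
      have : (1 - γ) * (2 * ε / (1 - γ) ^ 2) = 2 * ε / (1 - γ) := by field_simp
      rw [this]
      have : γ * (2 * ε / (1 - γ)) ≤ 1 * (2 * ε / (1 - γ)) := by
        refine mul_le_mul_of_nonneg_right (by linarith) (by positivity)
      linarith
    have h11 : γ * L ≤ (1 - γ) * c := by
      rw [hL, hc]
      have h : (1 - γ) * (τ * Real.log (Fintype.card A) / (1 - γ))
          = τ * Real.log (Fintype.card A) := by field_simp
      rw [h]
      nlinarith
    have h12 : γ * (2 * E) = (1 - γ) * a := by rw [ha]; field_simp
    have : (1 - γ) * D ≤ (1 - γ) * (a + b + c) := by nlinarith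
    exact le_of_mul_le_mul_left (by linarith [this]) h1γ
  have hsq : D ^ 2 ≤ (a + b + c) ^ 2 := by nlinarith
  have h3sq : (a + b + c) ^ 2 ≤ 3 * a ^ 2 + 3 * b ^ 2 + 3 * c ^ 2 := by
    nlinarith [sq_nonneg (a - b), sq_nonneg (b - c), sq_nonneg (a - c)]
  have hfin : 3 * a ^ 2 + 3 * b ^ 2 + 3 * c ^ 2 =
      12 * γ ^ 2 / (1 - γ) ^ 2 * E ^ 2 + 12 * ε ^ 2 / (1 - γ) ^ 4 +
        3 * τ ^ 2 * Real.log (Fintype.card A) ^ 2 / (1 - γ) ^ 2 := by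
    rw [ha, hb, hc]
    field_simp
    ring
  linarith [hsq, h3sq, hfin.le]


end
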